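/- Let m be a positive even integer and let A, B ⊆ Z_m with A ∪ B = Z_m and |A ∩ B| = 2. Then R_A(n) = R_B(n) for all n ∈ Z_m if and only if B = A + m/2 (the translate of A by the residue class of m/2). -/
import Mathlib
open Finset

def repFn {m : ℕ} (A : Finset (ZMod m)) (n : ZMod m) : ℕ :=
  ((A ×ˢ A).filter (fun p => p.1 + p.2 = n)).card

-- indicator
def chi {m : ℕ} (S : Finset (ZMod m)) (x : ZMod m) : ℤ := if x ∈ S then 1 else 0

lemma repFn_sum {m : ℕ} [NeZero m] (A : Finset (ZMod m)) (n : ZMod m) :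
    (repFn A n : ℤ) = ∑ x : ZMod m, chi A x * chi A (n - x) := by
  have h1 : repFn A n = (univ.filter (fun x : ZMod m => x ∈ A ∧ n - x ∈ A)).card := by
    unfold repFn
    apply Finset.card_bij' (fun p _ => p.1) (fun x _ => (x, n - x))
    · rintro ⟨a, b⟩ hp
      simp only [mem_filter, mem_product] at hp
      obtain ⟨⟨ha, hb⟩, hs⟩ := hp
      simp only [mem_filter, mem_univ, true_and]
      exact ⟨ha, by rw [← hs]; simpa using hb⟩
    · intro x hx
      simp only [mem_filter, mem_univ, true_and] at hx
      simp only [mem_filter, mem_product]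
      exact ⟨⟨hx.1, hx.2⟩, by ring⟩
    · rintro ⟨a, b⟩ hp
      simp only [mem_filter, mem_product] at hp
      simp only [Prod.mk.injEq]
      exact ⟨trivial, by rw [← hp.2]; ring⟩
    · intro x hx; rfl
  rw [h1, Finset.card_filter]
  push_cast
  refine Finset.sum_congr rfl fun x _ => ?_
  unfold chi
  split_ifs with h h1 h2 <;> simp_all



-- translate invariance when 2h = 0
lemma repFn_translate {m : ℕ} (A : Finset (ZMod m)) (h : ZMod m) (hh : h + h = 0)
    (n : ZMod m) : repFn (A.image (fun x => x + h)) n = repFn A n := by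
  unfold repFn
  apply Finset.card_bij' (fun p _ => (p.1 + h, p.2 + h)) (fun p _ => (p.1 + h, p.2 + h))
  · rintro ⟨a, b⟩ hp
    simp only [mem_filter, mem_product, mem_image] at hp ⊢
    obtain ⟨⟨ha, hb⟩, hs⟩ := hp
    obtain ⟨a', ha', rfl⟩ := ha
    obtain ⟨b', hb', rfl⟩ := hb
    refine ⟨⟨by rwa [add_assoc, hh, add_zero], by rwa [add_assoc, hh, add_zero]⟩, ?_⟩
    linear_combination hs + hh
  · rintro ⟨a, b⟩ hp
    simp only [mem_filter, mem_product, mem_image] at hp ⊢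
    obtain ⟨⟨ha, hb⟩, hs⟩ := hp
    refine ⟨⟨⟨a, ha, rfl⟩, ⟨b, hb, rfl⟩⟩, ?_⟩
    linear_combination hs + hh
  · rintro ⟨a, b⟩ _
    simp only [Prod.mk.injEq]
    constructor <;> rw [add_assoc, hh, add_zero]
  · rintro ⟨a, b⟩ _
    simp only [Prod.mk.injEq]
    constructor <;> rw [add_assoc, hh, add_zero]

lemma cross_comm {m : ℕ} [NeZero m] (n : ZMod m)
    (f g : ZMod m → ℤ) :
    ∑ x : ZMod m, f x * g (n - x) = ∑ x : ZMod m, g x * f (n - x) := by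
  rw [← Equiv.sum_comp (Equiv.subLeft n) (fun x => g x * f (n - x))]
  refine Finset.sum_congr rfl fun x _ => ?_
  simp [Equiv.subLeft, sub_sub_cancel, mul_comm]

lemma shift_sum {m : ℕ} [NeZero m] (c : ZMod m) (f : ZMod m → ℤ) :
    ∑ n : ZMod m, f (n - c) = ∑ n : ZMod m, f n := by
  rw [← Equiv.sum_comp (Equiv.subRight c) f]
  refine Finset.sum_congr rfl fun x _ => ?_
  simp [Equiv.subRight]

def dfn {m : ℕ} (A B : Finset (ZMod m)) (x : ZMod m) : ℤ := chi A x - chi B x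

lemma forward {m : ℕ} [NeZero m] (hm : Even m) (A B : Finset (ZMod m))
    (hU : A ∪ B = Finset.univ) (hI : (A ∩ B).card = 2)
    (hR : ∀ n : ZMod m, repFn A n = repFn B n) :
    B = A.image (fun x => x + ((m / 2 : ℕ) : ZMod m)) := by
  classical
  obtain ⟨c1, c2, hne, hC⟩ := Finset.card_eq_two.mp hI
  have hS : ∀ x, chi A x + chi B x = 1 + chi (A ∩ B) x := by
    intro x
    have hx : x ∈ A ∪ B := hU ▸ mem_univ x
    rw [mem_union] at hx
    unfold chi
    by_cases hA : x ∈ A <;> by_cases hB : x ∈ B <;>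
      simp [hA, hB, Finset.mem_inter] <;> tauto
  have key0 : ∀ n : ZMod m,
      (∑ x : ZMod m, dfn A B x) + (dfn A B (n - c1) + dfn A B (n - c2)) = 0 := by
    intro n
    have e1 : ∑ x : ZMod m, dfn A B x * (chi A (n - x) + chi B (n - x)) = 0 := by
      have expand : ∀ x : ZMod m, dfn A B x * (chi A (n - x) + chi B (n - x)) =
          chi A x * chi A (n-x) - chi B x * chi B (n-x)
          + (chi A x * chi B (n-x) - chi B x * chi A (n-x)) := by
        intro x; unfold dfn; ring
      simp_rw [expand]
      rw [Finset.sum_add_distrib, Finset.sum_sub_distrib, Finset.sum_sub_distrib,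
        ← repFn_sum A n, ← repFn_sum B n, cross_comm n (chi A) (chi B), hR n]
      ring
    have e2 : ∑ x : ZMod m, dfn A B x * (chi A (n - x) + chi B (n - x)) =
        (∑ x : ZMod m, dfn A B x) + (dfn A B (n - c1) + dfn A B (n - c2)) := by
      simp_rw [hS]
      have expand2 : ∀ x : ZMod m, dfn A B x * (1 + chi (A ∩ B) (n - x)) =
          dfn A B x + dfn A B x * chi (A ∩ B) (n - x) := by
        intro x; ring
      simp_rw [expand2]
      rw [Finset.sum_add_distrib]
      congr 1
      rw [cross_comm n (dfn A B) (chi (A ∩ B))]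
      have expand3 : ∀ x : ZMod m, chi (A ∩ B) x * dfn A B (n - x) =
          if x ∈ A ∩ B then dfn A B (n - x) else 0 := by
        intro x; unfold chi; split_ifs <;> simp
      simp_rw [expand3]
      rw [Finset.sum_ite_mem, Finset.univ_inter, hC, Finset.sum_pair hne]
    rw [← e2]; exact e1
  have hs0 : (∑ x : ZMod m, dfn A B x) = 0 := by
    have hsum : ∑ n : ZMod m,
        ((∑ x : ZMod m, dfn A B x) + (dfn A B (n - c1) + dfn A B (n - c2))) = 0 := by
      simp only [key0]
      simp
    rw [Finset.sum_add_distrib, Finset.sum_add_distrib, shift_sum c1 (dfn A B),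
      shift_sum c2 (dfn A B), Finset.sum_const, Finset.card_univ, ZMod.card] at hsum
    have h2 : (∑ x : ZMod m, dfn A B x) * ((m : ℤ) + 2) = 0 := by
      rw [nsmul_eq_mul] at hsum
      linear_combination hsum
    rcases mul_eq_zero.mp h2 with h | h
    · exact h
    · exfalso
      have : (0:ℤ) < m := by exact_mod_cast Nat.pos_of_ne_zero (NeZero.ne m)
      linarith
  set d := c2 - c1 with hd
  have key : ∀ x : ZMod m, dfn A B (x + d) = - dfn A B x := by
    intro x
    have h0 := key0 (x + c2)
    rw [hs0, zero_add] at h0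
    have h1 : x + c2 - c1 = x + d := by rw [hd]; ring
    have h2 : x + c2 - c2 = x := by ring
    rw [h1, h2] at h0
    linarith
  have hmemD : ∀ x : ZMod m, dfn A B x = 0 ↔ x ∈ A ∩ B := by
    intro x
    have hx : x ∈ A ∪ B := hU ▸ mem_univ x
    rw [mem_union] at hx
    unfold dfn chi
    rw [Finset.mem_inter]
    by_cases hA : x ∈ A <;> by_cases hB : x ∈ B <;> simp [hA, hB] <;> tauto
  have hc1 : c1 ∈ A ∩ B := by rw [hC]; simp
  have hc2 : c2 ∈ A ∩ B := by rw [hC]; simp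
  have hcd : c2 + d = c1 := by
    have h0 : dfn A B (c2 + d) = 0 := by
      rw [key, (hmemD c2).mpr hc2]; ring
    have h3 := (hmemD _).mp h0
    rw [hC, Finset.mem_insert, Finset.mem_singleton] at h3
    rcases h3 with h | h
    · exact h
    · exfalso; apply hne
      linear_combination hd - h
  have hdd : d + d = 0 := by linear_combination hcd + hd
  have hc1d : c1 + d = c2 := by linear_combination hd
  have hd2 : d = ((m / 2 : ℕ) : ZMod m) := by
    have hdne : d ≠ 0 := by
      intro h0
      exact hne (by linear_combination hd - h0)
    have hv : ((d.val + d.val : ℕ) : ZMod m) = 0 := by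
      push_cast
      rw [ZMod.natCast_val, ZMod.cast_id]
      exact hdd
    rw [ZMod.natCast_eq_zero_iff] at hv
    have hlt : d.val < m := ZMod.val_lt d
    have hpos : 0 < d.val := by
      rcases Nat.eq_zero_or_pos d.val with h | h
      · exact absurd ((ZMod.val_eq_zero d).mp h) hdne
      · exact h
    obtain ⟨k, hk⟩ := hv
    have hval : d.val = m / 2 := by
      have hkpos : 0 < k := by
        rcases Nat.eq_zero_or_pos k with h | h
        · subst h; omega
        · exact h
      have hklt : k < 2 := by
        by_contra h
        push_neg at h
        have h2 : m * 2 ≤ m * k := Nat.mul_le_mul_left m h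
        omega
      have hk1 : k = 1 := by omega
      subst hk1
      rw [mul_one] at hk
      omega
    rw [← hval]
    rw [ZMod.natCast_val, ZMod.cast_id]
  ext y
  simp only [Finset.mem_image]
  constructor
  · intro hyB
    refine ⟨y + d, ?_, by rw [← hd2, add_assoc, hdd, add_zero]⟩
    by_cases hyC : y ∈ A ∩ B
    · rw [hC, Finset.mem_insert, Finset.mem_singleton] at hyC
      rcases hyC with rfl | rfl
      · rw [hc1d]; exact (Finset.mem_inter.mp hc2).1
      · rw [hcd]; exact (Finset.mem_inter.mp hc1).1
    · have hyA : y ∉ A := fun hA => hyC (Finset.mem_inter.mpr ⟨hA, hyB⟩)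
      have h1 : dfn A B y = -1 := by simp [dfn, chi, hyA, hyB]
      have h2 : dfn A B (y + d) = 1 := by rw [key, h1]; ring
      by_contra hc
      simp only [dfn, chi, if_neg hc] at h2
      split_ifs at h2 <;> omega
  · rintro ⟨a, haA, rfl⟩
    rw [← hd2]
    by_cases haC : a ∈ A ∩ B
    · rw [hC, Finset.mem_insert, Finset.mem_singleton] at haC
      rcases haC with rfl | rfl
      · rw [hc1d]; exact (Finset.mem_inter.mp hc2).2
      · rw [hcd]; exact (Finset.mem_inter.mp hc1).2
    · have haB : a ∉ B := fun hB => haC (Finset.mem_inter.mpr ⟨haA, hB⟩)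
      have h1 : dfn A B a = 1 := by simp [dfn, chi, haA, haB]
      have h2 : dfn A B (a + d) = -1 := by rw [key, h1]
      by_contra hc
      simp only [dfn, chi, if_neg hc] at h2
      split_ifs at h2 <;> omega

theorem stmt2 (m : ℕ) [NeZero m] (hm : Even m)
    (A B : Finset (ZMod m)) (hU : A ∪ B = Finset.univ) (hI : (A ∩ B).card = 2) :
    (∀ n : ZMod m, repFn A n = repFn B n) ↔
      B = A.image (fun x => x + ((m / 2 : ℕ) : ZMod m)) := by
  constructor
  · exact forward hm A B hU hI
  · intro hB n
    have hh : ((m / 2 : ℕ) : ZMod m) + ((m / 2 : ℕ) : ZMod m) = 0 := by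
      rw [← Nat.cast_add]
      obtain ⟨r, hr⟩ := hm
      have h2 : m / 2 + m / 2 = m := by omega
      rw [h2, ZMod.natCast_self]
    rw [hB, repFn_translate A _ hh n]
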